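/- Let Φ(τ) = τ/log(e+τ) and θ(x,τ) = τ/(log(e+|x|)+log(e+τ)). Then L_*^Φ(ℝⁿ) ⊂ L^θ(ℝⁿ) and there exists a positive constant C such that ‖f‖_{L^θ} ≤ C ‖f‖_{L_*^Φ} for every f ∈ L_*^Φ(ℝⁿ). -/

import Mathlib

open MeasureTheory ENNReal

/-- Luxemburg norm for the Orlicz function Φ, valued in ℝ≥0∞. -/
noncomputable def luxNormE {n : ℕ} (Φ : ℝ → ℝ)
    (f : EuclideanSpace ℝ (Fin n) → ℝ) : ℝ≥0∞ :=
  sInf ((fun l : NNReal => (l : ℝ≥0∞)) ''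
    {l : NNReal | 0 < l ∧ ∫⁻ x, ENNReal.ofReal (Φ (|f x| / (l : ℝ))) ≤ 1})

/-- The unit cube `Q_k = k + [0,1)ⁿ` for `k ∈ ℤⁿ`. -/
def unitCube {n : ℕ} (k : Fin n → ℤ) : Set (EuclideanSpace ℝ (Fin n)) :=
  {x | ∀ i, (k i : ℝ) ≤ x i ∧ x i < (k i : ℝ) + 1}

/-- The variant Orlicz norm `‖f‖_{L_*^Φ} = Σ_{k∈ℤⁿ} ‖f·1_{Q_k}‖_{L^Φ}`. -/
noncomputable def starNormE {n : ℕ} (Φ : ℝ → ℝ)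
    (f : EuclideanSpace ℝ (Fin n) → ℝ) : ℝ≥0∞ :=
  ∑' k : Fin n → ℤ, luxNormE Φ (Set.indicator (unitCube k) f)

/-- The Musielak–Orlicz norm for θ(x,τ) = τ/(log(e+|x|)+log(e+τ)), valued in ℝ≥0∞. -/
noncomputable def thetaNormE {n : ℕ} (f : EuclideanSpace ℝ (Fin n) → ℝ) : ℝ≥0∞ :=
  sInf ((fun l : NNReal => (l : ℝ≥0∞)) ''
    {l : NNReal | 0 < l ∧ ∫⁻ x, ENNReal.ofReal ((|f x| / (l : ℝ)) /
      (Real.log (Real.exp 1 + ‖x‖) + Real.log (Real.exp 1 + |f x| / (l : ℝ)))) ≤ 1})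

open MeasureTheory ENNReal


section logs
variable {t u v L a s : ℝ}

lemma one_le_logE (ht : 0 ≤ t) : 1 ≤ Real.log (Real.exp 1 + t) :=
  calc (1:ℝ) = Real.log (Real.exp 1) := (Real.log_exp 1).symm
  _ ≤ _ := Real.log_le_log (Real.exp_pos 1) (by linarith)

lemma logE_pos (ht : 0 ≤ t) : 0 < Real.log (Real.exp 1 + t) :=
  lt_of_lt_of_le one_pos (one_le_logE ht)

/-- Monotonicity of Φ(t) = t / log(e+t) on [0, ∞). -/
lemma phi_mono (h0 : 0 ≤ u) (huv : u ≤ v) :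
    u / Real.log (Real.exp 1 + u) ≤ v / Real.log (Real.exp 1 + v) := by
  have hv : 0 ≤ v := le_trans h0 huv
  have hlu := one_le_logE h0
  have hlv := one_le_logE hv
  have heu : (0:ℝ) < Real.exp 1 + u := lt_of_lt_of_le (Real.exp_pos 1) (by linarith)
  have hev : (0:ℝ) < Real.exp 1 + v := lt_of_lt_of_le (Real.exp_pos 1) (by linarith)
  have key : Real.log (Real.exp 1 + v) - Real.log (Real.exp 1 + u) ≤ (v - u) / (Real.exp 1 + u) := by
    rw [← Real.log_div (ne_of_gt hev) (ne_of_gt heu)]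
    have := Real.log_le_sub_one_of_pos (div_pos hev heu)
    calc Real.log ((Real.exp 1 + v) / (Real.exp 1 + u)) ≤ (Real.exp 1 + v) / (Real.exp 1 + u) - 1 := this
    _ = (v - u) / (Real.exp 1 + u) := by field_simp; ring
  rw [div_le_div_iff₀ (by linarith) (by linarith)]
  -- u * log(e+v) ≤ v * log(e+u)
  have h2 : u * (Real.log (Real.exp 1 + v) - Real.log (Real.exp 1 + u)) ≤ v - u := by
    calc u * (Real.log (Real.exp 1 + v) - Real.log (Real.exp 1 + u))
        ≤ u * ((v - u) / (Real.exp 1 + u)) := by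
          apply mul_le_mul_of_nonneg_left key h0
    _ = (v - u) * (u / (Real.exp 1 + u)) := by ring
    _ ≤ (v - u) * 1 := by
          apply mul_le_mul_of_nonneg_left _ (by linarith)
          rw [div_le_one heu]; linarith [Real.exp_pos 1]
    _ = v - u := mul_one _
  nlinarith [mul_le_mul_of_nonneg_right huv (le_trans zero_le_one hlu)]

lemma logE_add_le (hx : 1 ≤ v) : Real.log (Real.exp 1 + v) ≤ 2 + Real.log v := by
  have he : (2.7:ℝ) < Real.exp 1 := by
    have := Real.exp_one_gt_d9; linarith
  have he2 : Real.exp 1 < 2.7182818286 := Real.exp_one_lt_d9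
  have h1 : Real.exp 1 + v ≤ Real.exp 1 ^ 2 * v := by
    have h3 : (Real.exp 1 ^ 2 - 1) * 1 ≤ (Real.exp 1 ^ 2 - 1) * v :=
      mul_le_mul_of_nonneg_left hx (by nlinarith)
    nlinarith
  calc Real.log (Real.exp 1 + v) ≤ Real.log (Real.exp 1 ^ 2 * v) :=
        Real.log_le_log (by positivity) h1
  _ = 2 + Real.log v := by
        rw [Real.log_mul (by positivity) (by linarith), Real.log_pow, Real.log_exp]; norm_num

lemma logE_mul_le (hu : 0 ≤ u) (hv : 0 ≤ v) :
    Real.log (Real.exp 1 + u * v) ≤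
      Real.log (Real.exp 1 + u) + Real.log (Real.exp 1 + v) := by
  have he : (2.7:ℝ) < Real.exp 1 := by
    have := Real.exp_one_gt_d9; linarith
  have h1 : Real.exp 1 + u * v ≤ (Real.exp 1 + u) * (Real.exp 1 + v) := by nlinarith
  calc Real.log (Real.exp 1 + u * v) ≤ Real.log ((Real.exp 1 + u) * (Real.exp 1 + v)) :=
        Real.log_le_log (by positivity) h1
  _ = _ := Real.log_mul (by positivity) (by positivity)

/-- Core pointwise inequality. -/
lemma core_ineq (hL : 1 ≤ L) (ha0 : 0 < a) (ha1 : a ≤ 1) (hs : 0 ≤ s) :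
    (a * s) / (L + Real.log (Real.exp 1 + a * s)) ≤
      2 * a * (1 + Real.log (Real.exp 1 + 1 / a) / L) *
        (s / Real.log (Real.exp 1 + s)) := by
  have has : 0 ≤ a * s := mul_nonneg ha0.le hs
  set la := Real.log (Real.exp 1 + a * s) with hla
  set ls := Real.log (Real.exp 1 + s) with hls
  set li := Real.log (Real.exp 1 + 1 / a) with hli
  have h1a : 1 ≤ la := one_le_logE has
  have h1s : 1 ≤ ls := one_le_logE hs
  have h1i : 1 ≤ li := one_le_logE (by positivity)
  have hL0 : (0:ℝ) < L := by linarith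
  have hdisj : ls ≤ 2 * la ∨ ls ≤ 2 * li := by
    by_cases hc : ls ≤ 2 * la
    · exact Or.inl hc
    · right
      push_neg at hc
      have hkey : Real.log a + ls ≤ la := by
        rw [hla, hls, ← Real.log_mul (ne_of_gt ha0) (by positivity)]
        exact Real.log_le_log (by positivity) (by nlinarith [Real.exp_pos 1])
      have hnegloga : Real.log (1/a) ≤ li :=
        Real.log_le_log (by positivity) (by linarith [Real.exp_pos 1])
      rw [Real.log_div one_ne_zero (ne_of_gt ha0), Real.log_one, zero_sub] at hnegloga
      linarith
  have hrhs : 2 * a * (1 + li / L) * (s / ls) = (2 * a * (L + li) * s) / (L * ls) := by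
    field_simp
  rw [hrhs, div_le_div_iff₀ (by linarith) (by positivity)]
  have hA : ∀ w : ℝ, 1 ≤ w → ls ≤ 2 * w → (w = la ∨ w = li) → L * ls ≤ 2 * ((L + li) * (L + la)) := by
    intro w hw hlsw hcase
    have h1 : L * ls ≤ L * (2 * w) := mul_le_mul_of_nonneg_left hlsw hL0.le
    rcases hcase with rfl | rfl
    · nlinarith
    · nlinarith
  rcases hdisj with h | h
  · have := mul_le_mul_of_nonneg_left (hA la h1a h (Or.inl rfl)) has
    nlinarith [this]
  · have := mul_le_mul_of_nonneg_left (hA li h1i h (Or.inr rfl)) has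
    nlinarith [this]
end logs

noncomputable def muW {n : ℕ} (k : Fin n → ℤ) : ℝ := ∏ i, ((1 + |(k i : ℝ)|) ^ 2)⁻¹

lemma muW_pos {n : ℕ} (k : Fin n → ℤ) : 0 < muW k := by
  apply Finset.prod_pos; intro i _; positivity

lemma muW_le_one {n : ℕ} (k : Fin n → ℤ) : muW k ≤ 1 := by
  apply Finset.prod_le_one
  · intro i _; positivity
  · intro i _
    rw [inv_le_one_iff₀]
    right
    nlinarith [abs_nonneg ((k i : ℝ))]

lemma absCoord_le_norm {n : ℕ} (x : EuclideanSpace ℝ (Fin n)) (i : Fin n) : |x i| ≤ ‖x‖ := by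
  rw [EuclideanSpace.norm_eq]
  rw [show |x i| = Real.sqrt ((x i)^2) from (Real.sqrt_sq_eq_abs _).symm]
  apply Real.sqrt_le_sqrt
  have : (x i)^2 = ‖x i‖^2 := by rw [Real.norm_eq_abs, sq_abs]
  rw [this]
  exact Finset.single_le_sum (f := fun j => ‖x j‖^2) (fun j _ => by positivity) (Finset.mem_univ i)

lemma measurable_coord {n : ℕ} (i : Fin n) :
    Measurable (fun x : EuclideanSpace ℝ (Fin n) => x i) :=
  (EuclideanSpace.proj (𝕜 := ℝ) i).continuous.measurable

lemma measurableSet_unitCube {n : ℕ} (k : Fin n → ℤ) : MeasurableSet (unitCube k) := by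
  have : unitCube k = ⋂ i, ((fun x : EuclideanSpace ℝ (Fin n) => x i) ⁻¹'
      (Set.Ico ((k i : ℝ)) ((k i : ℝ) + 1))) := by
    ext x; simp [unitCube, Set.mem_Ico]
  rw [this]
  exact MeasurableSet.iInter fun i => (measurable_coord i) measurableSet_Ico

lemma iUnion_unitCube {n : ℕ} : (⋃ k : Fin n → ℤ, unitCube k) = Set.univ := by
  ext x
  simp only [Set.mem_iUnion, Set.mem_univ, iff_true]
  exact ⟨fun i => ⌊x i⌋, fun i => ⟨Int.floor_le _, Int.lt_floor_add_one _⟩⟩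

lemma log_inv_muW_le {n : ℕ} (k : Fin n → ℤ) (x : EuclideanSpace ℝ (Fin n))
    (hx : x ∈ unitCube k) :
    Real.log (muW k)⁻¹ ≤ 2 * n * Real.log (Real.exp 1 + ‖x‖) := by
  have hL1 : (1:ℝ) ≤ Real.log (Real.exp 1 + ‖x‖) :=
    calc (1:ℝ) = Real.log (Real.exp 1) := (Real.log_exp 1).symm
    _ ≤ _ := Real.log_le_log (Real.exp_pos 1) (by linarith [norm_nonneg x])
  rw [muW, ← Finset.prod_inv_distrib, Real.log_prod (fun i _ => by positivity)]
  have hterm : ∀ i : Fin n, Real.log (((1 + |(k i : ℝ)|) ^ 2)⁻¹)⁻¹ ≤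
      2 * Real.log (Real.exp 1 + ‖x‖) := by
    intro i
    rw [inv_inv, Real.log_pow]
    have h1 : (1:ℝ) + |(k i : ℝ)| ≤ Real.exp 1 + ‖x‖ := by
      have hk := hx i
      have : |(k i : ℝ)| ≤ |x i| + 1 := by
        cases abs_cases ((k i : ℝ)) with
        | inl h => rw [h.1]; cases abs_cases (x i) with
          | inl h2 => linarith [hk.1]
          | inr h2 => linarith [hk.1, hk.2, h.2]
        | inr h => rw [h.1]; cases abs_cases (x i) with
          | inl h2 => linarith [hk.1, hk.2]
          | inr h2 => linarith [hk.2]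
      have h2 : |x i| ≤ ‖x‖ := absCoord_le_norm x i
      have he : (2.7:ℝ) < Real.exp 1 := by linarith [Real.exp_one_gt_d9]
      linarith
    have h2 : Real.log (1 + |(k i : ℝ)|) ≤ Real.log (Real.exp 1 + ‖x‖) :=
      Real.log_le_log (by positivity) h1
    push_cast
    linarith
  calc ∑ i, Real.log (((1 + |(k i : ℝ)|) ^ 2)⁻¹)⁻¹
      ≤ ∑ _i : Fin n, 2 * Real.log (Real.exp 1 + ‖x‖) :=
        Finset.sum_le_sum (fun i _ => hterm i)
  _ = 2 * n * Real.log (Real.exp 1 + ‖x‖) := by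
      rw [Finset.sum_const, Finset.card_univ, Fintype.card_fin]; push_cast; ring
noncomputable def sigmaE : ℝ≥0∞ := ∑' m : ℤ, ENNReal.ofReal ((1 + |(m : ℝ)|) ^ 2)⁻¹

lemma summable_nu : Summable (fun m : ℤ => ((1 + |(m : ℝ)|) ^ 2)⁻¹) := by
  have hnat : Summable (fun n : ℕ => ((1 + (n : ℝ)) ^ 2)⁻¹) := by
    have h0 : Summable (fun n : ℕ => 1 / (n : ℝ) ^ 2) :=
      Real.summable_one_div_nat_pow.mpr one_lt_two
    have := (summable_nat_add_iff 1).mpr h0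
    apply this.congr
    intro n
    push_cast
    rw [one_div]
    ring_nf
  apply Summable.of_nat_of_neg
  · apply hnat.congr; intro n; norm_num
  · apply hnat.congr; intro n; push_cast; rw [abs_neg, abs_of_nonneg (by positivity)]

lemma sigmaE_eq : sigmaE = ENNReal.ofReal (∑' m : ℤ, ((1 + |(m : ℝ)|) ^ 2)⁻¹) :=
  (ENNReal.ofReal_tsum_of_nonneg (fun m => by positivity) summable_nu).symm

lemma sigmaE_ne_top : sigmaE ≠ ⊤ := by rw [sigmaE_eq]; exact ENNReal.ofReal_ne_top

lemma one_le_sigmaE : 1 ≤ sigmaE := by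
  have : (1:ℝ≥0∞) = ENNReal.ofReal ((1 + |((0:ℤ) : ℝ)|) ^ 2)⁻¹ := by norm_num
  rw [this]
  exact ENNReal.le_tsum 0

lemma tsum_muW (n : ℕ) :
    ∑' k : Fin n → ℤ, ENNReal.ofReal (muW k) = sigmaE ^ n := by
  induction n with
  | zero =>
      rw [tsum_eq_single (default : Fin 0 → ℤ) (fun b hb => absurd (Subsingleton.elim b default) hb)]
      simp [muW]
  | succ n ih =>
      rw [← (Fin.consEquiv (fun _ : Fin (n+1) => ℤ)).tsum_eq (fun k => ENNReal.ofReal (muW k))]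
      have hval : ∀ p : ℤ × (Fin n → ℤ),
          ENNReal.ofReal (muW ((Fin.consEquiv (fun _ : Fin (n+1) => ℤ)) p)) =
            ENNReal.ofReal ((1 + |(p.1 : ℝ)|) ^ 2)⁻¹ * ENNReal.ofReal (muW p.2) := by
        intro p
        have hmu : muW ((Fin.consEquiv (fun _ : Fin (n+1) => ℤ)) p) = ((1 + |(p.1 : ℝ)|) ^ 2)⁻¹ * muW p.2 := by
          rw [show (Fin.consEquiv (fun _ : Fin (n+1) => ℤ)) p = Fin.cons p.1 p.2 from rfl, muW, Fin.prod_univ_succ]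
          simp [muW, Fin.cons_zero, Fin.cons_succ]
        rw [hmu, ENNReal.ofReal_mul (by positivity)]
      calc ∑' p : ℤ × (Fin n → ℤ), ENNReal.ofReal (muW ((Fin.consEquiv (fun _ : Fin (n+1) => ℤ)) p))
          = ∑' p : ℤ × (Fin n → ℤ),
              ENNReal.ofReal ((1 + |(p.1 : ℝ)|) ^ 2)⁻¹ * ENNReal.ofReal (muW p.2) :=
            tsum_congr hval
      _ = ∑' (m : ℤ) (k : Fin n → ℤ),
              ENNReal.ofReal ((1 + |(m : ℝ)|) ^ 2)⁻¹ * ENNReal.ofReal (muW k) :=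
            ENNReal.tsum_prod'
      _ = sigmaE * sigmaE ^ n := by
            simp_rw [ENNReal.tsum_mul_left, ih, ENNReal.tsum_mul_right]
            rw [sigmaE]
      _ = sigmaE ^ (n + 1) := by rw [pow_succ]; ring
lemma lux_admissible {n : ℕ} (g : EuclideanSpace ℝ (Fin n) → ℝ) {lam : ℝ}
    (hlt : luxNormE (fun τ => τ / Real.log (Real.exp 1 + τ)) g < ENNReal.ofReal lam) :
    ∫⁻ x, ENNReal.ofReal ((|g x| / lam) / Real.log (Real.exp 1 + |g x| / lam)) ≤ 1 := by
  obtain ⟨y, hy, hylt⟩ := sInf_lt_iff.mp hlt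
  obtain ⟨l, ⟨hl0, hint⟩, rfl⟩ := hy
  have hlam0 : 0 < lam := ENNReal.ofReal_pos.mp (lt_of_le_of_lt zero_le hylt)
  have hllam : (l : ℝ) < lam := by
    have hylt' : ENNReal.ofReal (l:ℝ) < ENNReal.ofReal lam := by
      simpa [ENNReal.ofReal_coe_nnreal] using hylt
    exact (ENNReal.ofReal_lt_ofReal_iff hlam0).mp hylt'
  have hl0' : (0:ℝ) < (l : ℝ) := hl0
  refine le_trans (lintegral_mono fun x => ?_) hint
  apply ENNReal.ofReal_le_ofReal
  exact phi_mono (by positivity) (by gcongr)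

lemma numeric_choice (n : ℕ) {M : ℝ} (hM : 1 ≤ M) :
    2 * (3 + 2 * (n:ℝ) + Real.log (Real.exp 1 + (16 * ((n:ℝ) + 2) * (1 + M)) * (1 + M)))
      ≤ 16 * ((n:ℝ) + 2) * (1 + M) := by
  have hn : (0:ℝ) ≤ (n:ℝ) := Nat.cast_nonneg n
  have h1 : Real.log (Real.exp 1 + (16 * ((n:ℝ) + 2) * (1 + M)) * (1 + M)) ≤
      2 + Real.log ((16 * ((n:ℝ) + 2) * (1 + M)) * (1 + M)) :=
    logE_add_le (by
      have hM2 : (2:ℝ) ≤ 1 + M := by linarith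
      have hn2 : (2:ℝ) ≤ (n:ℝ) + 2 := by linarith
      have hstep : (16:ℝ) * 2 * 2 ≤ 16 * ((n:ℝ)+2) * (1+M) := by nlinarith
      nlinarith [mul_le_mul hstep hM2 (by norm_num) (by positivity : (0:ℝ) ≤ 16 * ((n:ℝ)+2) * (1+M))])
  have h2 : Real.log ((16 * ((n:ℝ) + 2) * (1 + M)) * (1 + M)) =
      Real.log 16 + Real.log ((n:ℝ) + 2) + 2 * Real.log (1 + M) := by
    rw [show (16 * ((n:ℝ) + 2) * (1 + M)) * (1 + M) = (16 * (((n:ℝ) + 2) * ((1+M)*(1+M)))) by ring,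
      Real.log_mul (by norm_num) (by positivity), Real.log_mul (by positivity) (by positivity),
      Real.log_mul (by positivity) (by positivity)]
    ring
  have h3 : Real.log 16 ≤ 3 := by
    rw [show (16:ℝ) = 2 ^ 4 by norm_num, Real.log_pow]
    have := Real.log_two_lt_d9
    push_cast
    linarith
  have h4 : Real.log ((n:ℝ) + 2) ≤ (n:ℝ) + 1 := by
    linarith [Real.log_le_sub_one_of_pos (show (0:ℝ) < (n:ℝ) + 2 by linarith)]
  have h5 : Real.log (1 + M) ≤ M := by
    linarith [Real.log_le_sub_one_of_pos (show (0:ℝ) < 1 + M by linarith)]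
  nlinarith

lemma pointwise_bound {t lam b Lx P G nn : ℝ} (ht : 0 ≤ t) (hb : 0 < b) (hblam : b ≤ lam)
    (hLx : 1 ≤ Lx) (hG : 0 ≤ G) (hnn : 0 ≤ nn)
    (hli : Real.log (Real.exp 1 + lam / b) ≤ G + 2 + 2 * nn * Lx)
    (hP : P = 3 + 2 * nn + G) :
    (t / lam) / (Lx + Real.log (Real.exp 1 + t / lam)) ≤
      2 * (b / lam) * P * ((t / b) / Real.log (Real.exp 1 + t / b)) := by
  have hlam0 : 0 < lam := lt_of_lt_of_le hb hblam
  have ha0 : 0 < b / lam := div_pos hb hlam0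
  have ha1 : b / lam ≤ 1 := (div_le_one hlam0).mpr hblam
  have hs : 0 ≤ t / b := by positivity
  have hts : t / lam = (b / lam) * (t / b) := by field_simp
  have hcore := core_ineq hLx ha0 ha1 hs
  rw [one_div_div] at hcore
  rw [hts]
  refine le_trans hcore ?_
  have hΦ0 : 0 ≤ (t / b) / Real.log (Real.exp 1 + t / b) :=
    div_nonneg hs (le_of_lt (logE_pos hs))
  have hfac : 1 + Real.log (Real.exp 1 + lam / b) / Lx ≤ P := by
    have hLx0 : 0 < Lx := by linarith
    have hdiv : Real.log (Real.exp 1 + lam / b) / Lx ≤ (G + 2 + 2 * nn * Lx) / Lx := by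
      gcongr
    have heq : (G + 2 + 2 * nn * Lx) / Lx = (G + 2) / Lx + 2 * nn := by field_simp
    have hds : (G + 2) / Lx ≤ G + 2 := div_le_self (by linarith) hLx
    rw [heq] at hdiv
    linarith
  exact mul_le_mul_of_nonneg_right
    (mul_le_mul_of_nonneg_left hfac (by positivity)) hΦ0

/-- L_*^Φ(ℝⁿ) ⊂ L^θ(ℝⁿ) with ‖f‖_{L^θ} ≤ C ‖f‖_{L_*^Φ}, where
Φ(τ) = τ/log(e+τ) and θ(x,τ) = τ/(log(e+|x|)+log(e+τ)). -/
theorem thetaNorm_le_starNorm (n : ℕ) :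
    ∃ C : NNReal, 0 < C ∧
      ∀ f : EuclideanSpace ℝ (Fin n) → ℝ, Measurable f →
        thetaNormE f ≤ (C : ℝ≥0∞) *
          starNormE (fun τ => τ / Real.log (Real.exp 1 + τ)) f := by
  set Φ : ℝ → ℝ := fun τ => τ / Real.log (Real.exp 1 + τ) with hΦdef
  set M : ℝ := (sigmaE ^ n).toReal with hMdef
  have hMtop : sigmaE ^ n ≠ ⊤ := ENNReal.pow_ne_top sigmaE_ne_top
  have hMeq : ENNReal.ofReal M = sigmaE ^ n := ENNReal.ofReal_toReal hMtop
  have hM1 : 1 ≤ M := by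
    have h1 : (1:ℝ≥0∞) ≤ sigmaE ^ n := one_le_pow_of_one_le' one_le_sigmaE n
    have h2 := ENNReal.toReal_mono hMtop h1
    simpa only [ENNReal.toReal_one] using h2
  set A : ℝ := 16 * ((n:ℝ) + 2) * (1 + M) with hAdef
  have hA0 : 0 < A := by positivity
  set c : ℝ := A * (1 + M) with hcdef
  have hc0 : 0 < c := by positivity
  have hA2 : (2:ℝ) ≤ A := by rw [hAdef]; nlinarith
  set P : ℝ := 3 + 2 * (n:ℝ) + Real.log (Real.exp 1 + A * (1 + M)) with hPdef
  have hG0 : 0 ≤ Real.log (Real.exp 1 + A * (1 + M)) := by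
    have := one_le_logE (t := A * (1 + M)) (by positivity); linarith
  have hP0 : 0 < P := by positivity
  have h2PA : 2 * P ≤ A := by
    have := numeric_choice n hM1
    rw [hPdef, hAdef]
    linarith [this]
  refine ⟨c.toNNReal, Real.toNNReal_pos.mpr hc0, ?_⟩
  intro f hf
  by_cases hNtop : starNormE Φ f = ⊤
  · rw [hNtop, ENNReal.mul_top (by simp [ne_of_gt (Real.toNNReal_pos.mpr hc0)])]
    exact le_top
  set N : ℝ≥0∞ := starNormE Φ f with hNdef
  -- the main estimate
  have main : ∀ ε : ℝ, 0 < ε → N ≤ ENNReal.ofReal ε →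
      thetaNormE f ≤ ENNReal.ofReal (c * ε) := by
    intro ε hε hNε
    set L : (Fin n → ℤ) → ℝ≥0∞ := fun k => luxNormE Φ (Set.indicator (unitCube k) f) with hLdef
    have hLfin : ∀ k, L k ≠ ⊤ := fun k =>
      ne_top_of_le_ne_top hNtop (ENNReal.le_tsum k)
    have hLε : ∀ k, (L k).toReal ≤ ε := by
      intro k
      have h1 : L k ≤ ENNReal.ofReal ε := le_trans (ENNReal.le_tsum k) hNε
      have := ENNReal.toReal_mono ENNReal.ofReal_ne_top h1
      rwa [ENNReal.toReal_ofReal hε.le] at this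
    set lam : ℝ := A * ε * (1 + M) with hlamdef
    have hlam0 : 0 < lam := by positivity
    set b : (Fin n → ℤ) → ℝ := fun k => (L k).toReal + ε * muW k with hbdef
    have hb0 : ∀ k, 0 < b k := fun k => by
      have h1 := ENNReal.toReal_nonneg (a := L k)
      have h2 := mul_pos hε (muW_pos k)
      simp only [hbdef]
      linarith
    have hblam : ∀ k, b k ≤ lam := by
      intro k
      have h1 : ε * muW k ≤ ε := by
        nlinarith [muW_le_one k, muW_pos k]
      have h2 : b k ≤ 2 * ε := by
        have := hLε k; simp only [hbdef]; linarith
      have h3 : 2 * ε ≤ lam := by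
        rw [hlamdef]
        have h4 : 2 * ε ≤ A * ε := by nlinarith
        nlinarith [mul_pos (mul_pos hA0 hε) (show (0:ℝ) < M by linarith)]
      linarith
    -- admissibility of b k
    have hbadm : ∀ k, ∫⁻ x, ENNReal.ofReal
        ((|Set.indicator (unitCube k) f x| / b k) /
          Real.log (Real.exp 1 + |Set.indicator (unitCube k) f x| / b k)) ≤ 1 := by
      intro k
      apply lux_admissible
      show L k < ENNReal.ofReal (b k)
      conv_lhs => rw [← ENNReal.ofReal_toReal (hLfin k)]
      rw [ENNReal.ofReal_lt_ofReal_iff (hb0 k)]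
      simp only [hbdef]
      nlinarith [muW_pos k]
    -- per-cube pointwise bound
    have hpt : ∀ k, ∀ x ∈ unitCube k,
        ENNReal.ofReal ((|f x| / lam) /
          (Real.log (Real.exp 1 + ‖x‖) + Real.log (Real.exp 1 + |f x| / lam))) ≤
        ENNReal.ofReal (2 * (b k / lam) * P) *
          ENNReal.ofReal ((|f x| / b k) / Real.log (Real.exp 1 + |f x| / b k)) := by
      intro k x hx
      rw [← ENNReal.ofReal_mul (mul_nonneg (mul_nonneg (by norm_num : (0:ℝ) ≤ 2)
        (div_nonneg (hb0 k).le hlam0.le)) hP0.le)]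
      apply ENNReal.ofReal_le_ofReal
      have hLx : 1 ≤ Real.log (Real.exp 1 + ‖x‖) := one_le_logE (norm_nonneg x)
      apply pointwise_bound (abs_nonneg (f x)) (hb0 k) (hblam k) hLx hG0 (Nat.cast_nonneg n)
        ?_ rfl
      -- log (e + lam / b k) ≤ G + 2 + 2n * Lx
      have h1 : lam / b k ≤ (A * (1 + M)) * (muW k)⁻¹ := by
        have hmu := muW_pos k
        have hbk := hb0 k
        have h2 : ε * muW k ≤ b k := by
          have := ENNReal.toReal_nonneg (a := L k); simp only [hbdef]; linarith
        rw [div_le_iff₀ hbk]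
        calc lam = (A * (1 + M)) * (muW k)⁻¹ * (ε * muW k) := by
              field_simp [hlamdef]; ring
        _ ≤ (A * (1 + M)) * (muW k)⁻¹ * b k := by
              apply mul_le_mul_of_nonneg_left h2 (by positivity)
      have hmu1 : (1:ℝ) ≤ (muW k)⁻¹ := by
        rw [one_le_inv_iff₀]
        exact ⟨muW_pos k, muW_le_one k⟩
      calc Real.log (Real.exp 1 + lam / b k)
          ≤ Real.log (Real.exp 1 + (A * (1 + M)) * (muW k)⁻¹) :=
            Real.log_le_log
              (by have := div_nonneg hlam0.le (hb0 k).le; linarith [Real.exp_pos 1])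
              (by linarith)
      _ ≤ Real.log (Real.exp 1 + A * (1 + M)) + Real.log (Real.exp 1 + (muW k)⁻¹) :=
            logE_mul_le (by positivity) (by positivity)
      _ ≤ Real.log (Real.exp 1 + A * (1 + M)) + (2 + Real.log (muW k)⁻¹) := by
            linarith [logE_add_le hmu1]
      _ ≤ Real.log (Real.exp 1 + A * (1 + M)) + 2 +
            2 * (n:ℝ) * Real.log (Real.exp 1 + ‖x‖) := by
            linarith [log_inv_muW_le k x hx]
    -- per-cube integral bound
    have hcube : ∀ k, (∫⁻ x in unitCube k, ENNReal.ofReal ((|f x| / lam) /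
          (Real.log (Real.exp 1 + ‖x‖) + Real.log (Real.exp 1 + |f x| / lam)))) ≤
        ENNReal.ofReal (2 * (b k / lam) * P) := by
      intro k
      refine le_trans (setLIntegral_mono' (measurableSet_unitCube k) (hpt k)) ?_
      rw [lintegral_const_mul' _ _ ENNReal.ofReal_ne_top]
      have step3 : (∫⁻ x in unitCube k,
            ENNReal.ofReal ((|f x| / b k) / Real.log (Real.exp 1 + |f x| / b k)))
          = ∫⁻ x in unitCube k, ENNReal.ofReal ((|Set.indicator (unitCube k) f x| / b k) /
              Real.log (Real.exp 1 + |Set.indicator (unitCube k) f x| / b k)) := by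
        apply setLIntegral_congr_fun (measurableSet_unitCube k)
        intro x hx
        simp only
        rw [Set.indicator_of_mem hx]
      rw [step3]
      calc ENNReal.ofReal (2 * (b k / lam) * P) *
            ∫⁻ x in unitCube k, ENNReal.ofReal ((|Set.indicator (unitCube k) f x| / b k) /
              Real.log (Real.exp 1 + |Set.indicator (unitCube k) f x| / b k))
          ≤ ENNReal.ofReal (2 * (b k / lam) * P) * 1 := by
            apply mul_le_mul_right
            exact le_trans (setLIntegral_le_lintegral _ _) (hbadm k)
      _ = ENNReal.ofReal (2 * (b k / lam) * P) := mul_one _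
    -- total modular bound
    have htot : (∫⁻ x, ENNReal.ofReal ((|f x| / lam) /
          (Real.log (Real.exp 1 + ‖x‖) + Real.log (Real.exp 1 + |f x| / lam)))) ≤ 1 := by
      rw [← setLIntegral_univ, ← iUnion_unitCube]
      refine le_trans (lintegral_iUnion_le _ _) ?_
      refine le_trans (ENNReal.tsum_le_tsum (fun k => hcube k)) ?_
      have hconst : ∀ k, ENNReal.ofReal (2 * (b k / lam) * P) =
          ENNReal.ofReal (2 * P / lam) * ENNReal.ofReal (b k) := by
        intro k
        rw [← ENNReal.ofReal_mul (div_nonneg (mul_nonneg zero_le_two hP0.le) hlam0.le)]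
        congr 1
        field_simp
      have hsumb : ∑' k : Fin n → ℤ, ENNReal.ofReal (b k) ≤ ENNReal.ofReal (ε * (1 + M)) := by
        have hb' : ∀ k : Fin n → ℤ, ENNReal.ofReal (b k) =
            L k + ENNReal.ofReal ε * ENNReal.ofReal (muW k) := by
          intro k
          simp only [hbdef]
          rw [ENNReal.ofReal_add ENNReal.toReal_nonneg (mul_nonneg hε.le (muW_pos k).le),
            ENNReal.ofReal_toReal (hLfin k), ENNReal.ofReal_mul hε.le]
        simp_rw [hb']
        rw [ENNReal.tsum_add, ENNReal.tsum_mul_left, tsum_muW, ← hMeq]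
        calc N + ENNReal.ofReal ε * ENNReal.ofReal M
            ≤ ENNReal.ofReal ε + ENNReal.ofReal ε * ENNReal.ofReal M :=
              add_le_add_left hNε _
        _ = ENNReal.ofReal (ε * (1 + M)) := by
              rw [← ENNReal.ofReal_mul hε.le, ← ENNReal.ofReal_add hε.le (by positivity)]
              congr 1
              ring
      calc ∑' k : Fin n → ℤ, ENNReal.ofReal (2 * (b k / lam) * P)
          = ENNReal.ofReal (2 * P / lam) * ∑' k : Fin n → ℤ, ENNReal.ofReal (b k) := by
            simp_rw [hconst]; rw [ENNReal.tsum_mul_left]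
      _ ≤ ENNReal.ofReal (2 * P / lam) * ENNReal.ofReal (ε * (1 + M)) :=
            mul_le_mul_right hsumb _
      _ = ENNReal.ofReal (2 * P / lam * (ε * (1 + M))) :=
            (ENNReal.ofReal_mul (div_nonneg (mul_nonneg zero_le_two hP0.le) hlam0.le)).symm
      _ = ENNReal.ofReal (2 * P / A) := by
            congr 1
            rw [hlamdef]
            field_simp
      _ ≤ 1 := by
            rw [ENNReal.ofReal_le_one, div_le_one hA0]
            linarith
    -- conclude: lam is admissible for the theta norm
    have hmem : thetaNormE f ≤ ENNReal.ofReal lam := by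
      apply sInf_le
      refine ⟨lam.toNNReal, ⟨Real.toNNReal_pos.mpr hlam0, ?_⟩, by simp [ENNReal.ofReal]⟩
      simp only [Real.coe_toNNReal _ hlam0.le]
      exact htot
    refine le_trans hmem (le_of_eq ?_)
    congr 1
    rw [hlamdef, hcdef]
    ring
  -- limit argument
  apply ENNReal.le_of_forall_pos_le_add
  intro η hη _
  have hN' : ENNReal.ofReal N.toReal = N := ENNReal.ofReal_toReal hNtop
  have hη' : (0:ℝ) < (η:ℝ) := hη
  have hεpos : 0 < N.toReal + (η:ℝ) / c := by positivity
  have hle : N ≤ ENNReal.ofReal (N.toReal + (η:ℝ) / c) :=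
    calc N = ENNReal.ofReal N.toReal := hN'.symm
    _ ≤ _ := ENNReal.ofReal_le_ofReal (by linarith [div_pos hη' hc0])
  have h1 := main (N.toReal + (η:ℝ) / c) hεpos hle
  refine le_trans h1 ?_
  have heq : c * (N.toReal + (η:ℝ) / c) = c * N.toReal + (η:ℝ) := by
    field_simp
  rw [heq, ENNReal.ofReal_add (by positivity) hη'.le]
  have h2 : ENNReal.ofReal (c * N.toReal) = (c.toNNReal : ℝ≥0∞) * N := by
    rw [ENNReal.ofReal_mul hc0.le, hN']
    rfl
  rw [h2, ENNReal.ofReal_coe_nnreal]
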